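/- Let T ≥ 1, R > 0, and let V be a finite nonempty collection of [−R, R]-valued trees of length T. Then for any η > 0 and α > 0, E_σ sup_{v∈V} Σ_{t=1}^T [ σ_t·(v_t(σ) − η·v_t(σ)²) − α·η·v_t(σ)² ] ≤ 2·log|V| · max(1/(αη), ηR²/α), where σ is uniform on {−1,+1}^T. -/

import Mathlib

noncomputable section

open Finset

/-- A `Z`-valued tree of length `T`: for each `t`, a map from sign prefixes of length `t−1`
(indices `0,…,t−1` in 0-based indexing) to `Z`. -/
def STree (Z : Type*) (T : ℕ) := (t : Fin T) → (Fin t.1 → Bool) → Z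

/-- Evaluation of a tree along a sign path. -/
def STree.eval {Z : Type*} {T : ℕ} (z : STree Z T) (t : Fin T) (σ : Fin T → Bool) : Z :=
  z t fun i => σ ⟨i.1, i.2.trans t.2⟩

/-- The real sign `±1` associated to a Boolean Rademacher variable. -/
def sgn {T : ℕ} (σ : Fin T → Bool) (t : Fin T) : ℝ := if σ t then 1 else -1

def sterm {T : ℕ} (η α : ℝ) (v : STree ℝ T) (t : Fin T) (σ : Fin T → Bool) : ℝ :=
  sgn σ t * (v.eval t σ - η * (v.eval t σ) ^ 2) - α * η * (v.eval t σ) ^ 2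

lemma ptwise (l c w : ℝ) (h : l ^ 2 * w ^ 2 ≤ 2 * (l * c)) :
    Real.exp (l * w - l * c) + Real.exp (-(l * w) - l * c) ≤ 2 := by
  have h1 : Real.exp (l * w - l * c) + Real.exp (-(l * w) - l * c)
      = 2 * Real.cosh (l * w) * Real.exp (-(l * c)) := by
    rw [Real.cosh_eq, sub_eq_add_neg, Real.exp_add, sub_eq_add_neg, Real.exp_add]
    ring
  rw [h1]
  have h2 : Real.cosh (l * w) ≤ Real.exp ((l * w) ^ 2 / 2) := Real.cosh_le_exp_half_sq _
  calc 2 * Real.cosh (l * w) * Real.exp (-(l * c))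
      ≤ 2 * Real.exp ((l*w)^2/2) * Real.exp (-(l*c)) := by
        have := Real.exp_nonneg (-(l*c))
        nlinarith [Real.cosh_pos (l*w)]
    _ = 2 * Real.exp ((l*w)^2/2 - l*c) := by rw [sub_eq_add_neg, Real.exp_add]; ring
    _ ≤ 2 * Real.exp 0 := by
        have : (l*w)^2/2 - l*c ≤ 0 := by nlinarith
        nlinarith [Real.exp_le_exp.mpr this]
    _ = 2 := by simp

lemma key (T : ℕ) (η α R l : ℝ) (hη : 0 < η) (hα : 0 < α) (hR : 0 < R)
    (hl : l * (1 + η ^ 2 * R ^ 2) = α * η)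
    (v : STree ℝ T) (hv : ∀ (t : Fin T) (b : Fin t.1 → Bool), |v t b| ≤ R)
    (n : ℕ) (hn : n ≤ T) :
    ∑ σ : Fin T → Bool, Real.exp (l * ∑ t ∈ univ.filter (fun t : Fin T => t.1 < n),
      sterm η α v t σ) ≤ 2 ^ T := by
  have hlpos : 0 < l := by
    have hD : 0 < 1 + η ^ 2 * R ^ 2 := by positivity
    have h0 : 0 < l * (1 + η ^ 2 * R ^ 2) := by rw [hl]; positivity
    nlinarith [h0, hD]
  revert hn
  induction n with
  | zero =>
      intro hn
      simp only [Nat.not_lt_zero, filter_false_of_mem, Finset.sum_empty, mul_zero,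
        Real.exp_zero, Finset.sum_const, Finset.card_univ, nsmul_eq_mul, mul_one]
      simp
  | succ n ih =>
      intro hn
      have hnT : n < T := hn
      have hn' : n ≤ T := hnT.le
      set e : Fin T := ⟨n, hnT⟩ with he
      have hnotmem : e ∉ univ.filter (fun t : Fin T => t.1 < n) := by simp [he]
      have hfilter : (univ.filter fun t : Fin T => t.1 < n + 1)
          = insert e (univ.filter fun t : Fin T => t.1 < n) := by
        ext t
        simp only [mem_filter, mem_univ, true_and, mem_insert, Fin.ext_iff, he]
        omega
      set S : (Fin T → Bool) → ℝ :=
        fun σ => ∑ t ∈ univ.filter (fun t : Fin T => t.1 < n), sterm η α v t σ with hS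
      have hsum : ∀ σ : Fin T → Bool,
          (∑ t ∈ univ.filter (fun t : Fin T => t.1 < n + 1), sterm η α v t σ)
            = sterm η α v e σ + S σ := by
        intro σ; rw [hfilter, Finset.sum_insert hnotmem]
      set g : (Fin T → Bool) → (Fin T → Bool) :=
        fun σ => Function.update σ e (!σ e) with hg
      have hinv : Function.Involutive g := by
        intro σ; funext i
        by_cases h : i = e <;> simp [hg, Function.update_apply, h]
      -- evaluation invariance
      have heval : ∀ (σ : Fin T → Bool) (t : Fin T), t.1 ≤ n → v.eval t (g σ) = v.eval t σ := by
        intro σ t ht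
        unfold STree.eval
        congr 1; funext i
        have hlt : (i : ℕ) < t.1 := i.2
        have : (⟨i.1, i.2.trans t.2⟩ : Fin T) ≠ e := by
          refine Fin.ne_of_val_ne ?_
          show (i : ℕ) ≠ n
          omega
        simp [hg, Function.update_apply, this]
      have hsgn : ∀ (σ : Fin T → Bool) (t : Fin T), t.1 < n → sgn (g σ) t = sgn σ t := by
        intro σ t ht
        have : t ≠ e := by
          refine Fin.ne_of_val_ne ?_
          show (t : ℕ) ≠ n
          omega
        simp [sgn, hg, Function.update_apply, this]
      have hsgne : ∀ σ : Fin T → Bool, sgn (g σ) e = -(sgn σ e) := by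
        intro σ
        have hge : g σ e = !σ e := by simp [hg]
        unfold sgn
        rw [hge]
        cases h : σ e <;> simp [h]
      have hSg : ∀ σ, S (g σ) = S σ := by
        intro σ
        refine Finset.sum_congr rfl fun t ht => ?_
        have ht' : t.1 < n := (mem_filter.mp ht).2
        unfold sterm
        rw [heval σ t ht'.le, hsgn σ t ht']
      -- pointwise bound on the pair
      have hpair : ∀ σ : Fin T → Bool,
          Real.exp (l * (sterm η α v e σ + S σ)) + Real.exp (l * (sterm η α v e (g σ) + S (g σ)))
            ≤ 2 * Real.exp (l * S σ) := by
        intro σ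
        set x := v.eval e σ with hx
        have hxR : |x| ≤ R := hv e _
        have hx2 : x ^ 2 ≤ R ^ 2 := by
          have := sq_abs x; nlinarith [abs_nonneg x]
        set w := x - η * x ^ 2 with hw
        set c := α * η * x ^ 2 with hc
        have hterm : sterm η α v e σ = sgn σ e * w - c := rfl
        have htermg : sterm η α v e (g σ) = -(sgn σ e * w) - c := by
          unfold sterm
          rw [heval σ e le_rfl, hsgne σ, ← hx, ← hw, ← hc]; ring
        have hkey : l ^ 2 * (sgn σ e * w) ^ 2 ≤ 2 * (l * c) := by
          have hs2 : (sgn σ e) ^ 2 = 1 := by unfold sgn; split <;> norm_num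
          have hw2 : w ^ 2 ≤ 2 * x ^ 2 * (1 + η ^ 2 * R ^ 2) := by
            rw [hw]
            nlinarith [sq_nonneg (x + η * x ^ 2),
              mul_le_mul_of_nonneg_left hx2 (by positivity : (0:ℝ) ≤ η ^ 2 * x ^ 2)]
          have h1 : l ^ 2 * (sgn σ e * w) ^ 2 = l ^ 2 * w ^ 2 := by
            rw [mul_pow, hs2]; ring
          have h3 : l ^ 2 * (2 * x ^ 2 * (1 + η ^ 2 * R ^ 2)) = 2 * (l * (α * η * x ^ 2)) := by
            rw [← hl]; ring
          have h4 := mul_le_mul_of_nonneg_left hw2 (by positivity : (0:ℝ) ≤ l ^ 2)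
          rw [h1, hc]
          linarith
        have := ptwise l c (sgn σ e * w) hkey
        rw [hSg σ, hterm, htermg]
        have e1 : l * (sgn σ e * w - c + S σ) = (l * (sgn σ e * w) - l * c) + l * S σ := by ring
        have e2 : l * (-(sgn σ e * w) - c + S σ) = (-(l * (sgn σ e * w)) - l * c) + l * S σ := by
          ring
        rw [e1, e2, Real.exp_add, Real.exp_add, ← add_mul]
        exact mul_le_mul_of_nonneg_right this (Real.exp_nonneg _)
      -- doubling
      have hdouble : (2:ℝ) * ∑ σ : Fin T → Bool,
          Real.exp (l * (sterm η α v e σ + S σ))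
          = ∑ σ : Fin T → Bool, (Real.exp (l * (sterm η α v e σ + S σ))
              + Real.exp (l * (sterm η α v e (g σ) + S (g σ)))) := by
        rw [Finset.sum_add_distrib]
        have := Equiv.sum_comp hinv.toPerm
          (fun σ => Real.exp (l * (sterm η α v e σ + S σ)))
        simp only [Function.Involutive.coe_toPerm] at this
        rw [this]; ring
      have hfinal : (2:ℝ) * ∑ σ : Fin T → Bool,
          Real.exp (l * (sterm η α v e σ + S σ)) ≤ 2 * ∑ σ : Fin T → Bool,
          Real.exp (l * S σ) := by
        rw [hdouble, Finset.mul_sum]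
        exact Finset.sum_le_sum fun σ _ => hpair σ
      have := ih hn'
      calc ∑ σ : Fin T → Bool, Real.exp (l * ∑ t ∈ univ.filter
            (fun t : Fin T => t.1 < n + 1), sterm η α v t σ)
          = ∑ σ : Fin T → Bool, Real.exp (l * (sterm η α v e σ + S σ)) := by
            refine Finset.sum_congr rfl fun σ _ => ?_; rw [hsum σ]
        _ ≤ ∑ σ : Fin T → Bool, Real.exp (l * S σ) := by linarith
        _ ≤ 2 ^ T := this

/-- Freedman-type offset Rademacher inequality for a finite collection of
`[−R,R]`-valued trees. -/
theorem stmt10 (T : ℕ) (hT : 1 ≤ T) (R : ℝ) (hR : 0 < R)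
    (V : Finset (STree ℝ T)) (hV : V.Nonempty)
    (hrange : ∀ v ∈ V, ∀ (t : Fin T) (b : Fin t.1 → Bool), |v t b| ≤ R)
    (η α : ℝ) (hη : 0 < η) (hα : 0 < α) :
    (∑ σ : Fin T → Bool, V.sup' hV fun v =>
        ∑ t, (sgn σ t * (v.eval t σ - η * (v.eval t σ) ^ 2) - α * η * (v.eval t σ) ^ 2))
        / 2 ^ T
      ≤ 2 * Real.log V.card * max (1 / (α * η)) (η * R ^ 2 / α) := by
  have hDpos : (0:ℝ) < 1 + η ^ 2 * R ^ 2 := by positivity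
  set l : ℝ := α * η / (1 + η ^ 2 * R ^ 2) with hldef
  have hlpos : 0 < l := by positivity
  have hl : l * (1 + η ^ 2 * R ^ 2) = α * η := by
    rw [hldef]; field_simp
  have hcard : Fintype.card (Fin T → Bool) = 2 ^ T := by
    simp [Fintype.card_fun]
  have hcardV : (1:ℝ) ≤ V.card := by
    exact_mod_cast Finset.card_pos.mpr hV
  have hlog : 0 ≤ Real.log V.card := Real.log_nonneg hcardV
  -- rewrite goal in terms of sterm
  have hgoal : (∑ σ : Fin T → Bool, V.sup' hV fun v =>
        ∑ t, (sgn σ t * (v.eval t σ - η * (v.eval t σ) ^ 2) - α * η * (v.eval t σ) ^ 2))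
      = ∑ σ : Fin T → Bool, V.sup' hV fun v => ∑ t, sterm η α v t σ := rfl
  rw [hgoal]
  set A : ℝ := ∑ σ : Fin T → Bool, V.sup' hV fun v => ∑ t, sterm η α v t σ with hA
  -- per-tree mgf bound
  have hkey : ∀ v ∈ V, ∑ σ : Fin T → Bool,
      Real.exp (l * ∑ t, sterm η α v t σ) ≤ 2 ^ T := by
    intro v hvV
    have h := key T η α R l hη hα hR hl v (hrange v hvV) T le_rfl
    have hfil : (univ.filter fun t : Fin T => t.1 < T) = univ := by
      ext t; simp [t.2]
    rwa [hfil] at h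
  -- Jensen
  have h2Tpos : (0:ℝ) < 2 ^ T := by positivity
  have hjensen : Real.exp (l * A / 2 ^ T)
      ≤ (∑ σ : Fin T → Bool, Real.exp (l * V.sup' hV fun v => ∑ t, sterm η α v t σ))
        / 2 ^ T := by
    have h1 : ∑ _σ : Fin T → Bool, ((2:ℝ) ^ T)⁻¹ = 1 := by
      rw [Finset.sum_const, Finset.card_univ, hcard, nsmul_eq_mul]
      push_cast
      field_simp
    have := convexOn_exp.map_sum_le (t := (univ : Finset (Fin T → Bool)))
      (w := fun _ => ((2:ℝ) ^ T)⁻¹)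
      (p := fun σ => l * V.sup' hV fun v => ∑ t, sterm η α v t σ)
      (fun _ _ => by positivity) h1 (fun _ _ => Set.mem_univ _)
    have heq : (∑ σ : Fin T → Bool, ((2:ℝ) ^ T)⁻¹ *
        (l * V.sup' hV fun v => ∑ t, sterm η α v t σ)) = l * A / 2 ^ T := by
      rw [← Finset.mul_sum, ← Finset.mul_sum, ← hA, div_eq_inv_mul]
    simp only [smul_eq_mul] at this
    rw [heq] at this
    refine this.trans ?_
    rw [Finset.sum_div]
    refine le_of_eq (Finset.sum_congr rfl fun σ _ => ?_)
    rw [div_eq_inv_mul]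
  -- sup'exp ≤ sum exp
  have hsupsum : ∀ σ : Fin T → Bool,
      Real.exp (l * V.sup' hV fun v => ∑ t, sterm η α v t σ)
        ≤ ∑ v ∈ V, Real.exp (l * ∑ t, sterm η α v t σ) := by
    intro σ
    obtain ⟨v₀, hv₀, hev⟩ := Finset.exists_mem_eq_sup' hV
      (fun v => ∑ t, sterm η α v t σ)
    rw [hev]
    exact Finset.single_le_sum (f := fun v => Real.exp (l * ∑ t, sterm η α v t σ))
      (fun v _ => Real.exp_nonneg _) hv₀
  -- combine
  have hchain : Real.exp (l * A / 2 ^ T) ≤ V.card := by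
    refine hjensen.trans ?_
    rw [div_le_iff₀ h2Tpos]
    calc (∑ σ : Fin T → Bool, Real.exp (l * V.sup' hV fun v => ∑ t, sterm η α v t σ))
        ≤ ∑ σ : Fin T → Bool, ∑ v ∈ V, Real.exp (l * ∑ t, sterm η α v t σ) :=
          Finset.sum_le_sum fun σ _ => hsupsum σ
      _ = ∑ v ∈ V, ∑ σ : Fin T → Bool, Real.exp (l * ∑ t, sterm η α v t σ) := by
          rw [Finset.sum_comm]
      _ ≤ ∑ _v ∈ V, (2:ℝ) ^ T := Finset.sum_le_sum hkey
      _ = V.card * 2 ^ T := by rw [Finset.sum_const, nsmul_eq_mul]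
  have hlA : l * (A / 2 ^ T) ≤ Real.log V.card := by
    rw [← Real.le_log_iff_exp_le (by linarith : (0:ℝ) < V.card)] at hchain
    calc l * (A / 2 ^ T) = l * A / 2 ^ T := by ring
      _ ≤ Real.log V.card := hchain
  have hdiv : A / 2 ^ T ≤ Real.log V.card * (1 / (α * η) + η * R ^ 2 / α) := by
    have h1 : A / 2 ^ T ≤ Real.log V.card / l :=
      (le_div_iff₀ hlpos).mpr (by linarith [mul_comm l (A / 2 ^ T)])
    refine h1.trans (le_of_eq ?_)
    rw [hldef]
    field_simp
  have hma := le_max_left (1 / (α * η)) (η * R ^ 2 / α)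
  have hmb := le_max_right (1 / (α * η)) (η * R ^ 2 / α)
  nlinarith [mul_le_mul_of_nonneg_left hma hlog, mul_le_mul_of_nonneg_left hmb hlog]
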